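/- Let $(Y_n)_{n\ge 1}$ be i.i.d. and let $X$ be the AR($p$)-process $X_n = \sum_{k=1}^p a_k X_{n-k} + Y_n$ (with $X_n = 0$ for $n\le 0$), where $\sum_{k=1}^p |a_k| < 1$ and $a_k > 0$ for at least one $k$. Let $a_+ = \sum_{k: a_k > 0} a_k$ and $a_- = \sum_{k: a_k < 0} a_k$. Then for every $\alpha < 0$, $\Pr(\max_{1\le n\le N} X_n \le 0) \ge \Pr(Y_1 \in [\alpha, 0]) \cdot \Pr(Y_1 \in [\alpha(1-a_+), \alpha |a_-|])^{N-1}$ for all $N \ge 1$. -/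

import Mathlib

open MeasureTheory ProbabilityTheory Finset

theorem stmt_15 {Ω : Type*} [MeasureSpace Ω] [IsProbabilityMeasure (ℙ : Measure Ω)]
    (p : ℕ) (hp : 1 ≤ p) (a : ℕ → ℝ)
    (hsum : ∑ k ∈ Finset.Icc 1 p, |a k| < 1)
    (hposk : ∃ k ∈ Finset.Icc 1 p, 0 < a k)
    (Y : ℕ → Ω → ℝ) (hmeas : ∀ n, Measurable (Y n))
    (hindep : iIndepFun Y ℙ)
    (hident : ∀ n, IdentDistrib (Y n) (Y 1) ℙ ℙ)
    (X : ℕ → Ω → ℝ) (hX0 : ∀ ω, X 0 ω = 0)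
    (hXrec : ∀ n, 1 ≤ n → ∀ ω,
      X n ω = ∑ k ∈ Finset.Icc 1 p, a k * X (n - k) ω + Y n ω)
    (aplus aminus : ℝ)
    (haplus : aplus = ∑ k ∈ (Finset.Icc 1 p).filter (fun k => 0 < a k), a k)
    (haminus : aminus = ∑ k ∈ (Finset.Icc 1 p).filter (fun k => a k < 0), a k) :
    ∀ α : ℝ, α < 0 → ∀ N : ℕ, 1 ≤ N →
      ℙ {ω | Y 1 ω ∈ Set.Icc α 0} *
        ℙ {ω | Y 1 ω ∈ Set.Icc (α * (1 - aplus)) (α * |aminus|)} ^ (N - 1) ≤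
      ℙ {ω | ∀ n ∈ Finset.Icc 1 N, X n ω ≤ 0} := by
  intro α hα N hN
  set I1 : Set ℝ := Set.Icc α 0 with hI1
  set I2 : Set ℝ := Set.Icc (α * (1 - aplus)) (α * |aminus|) with hI2
  have haminus_nonpos : aminus ≤ 0 := by
    rw [haminus]
    exact Finset.sum_nonpos fun k hk => le_of_lt (Finset.mem_filter.mp hk).2
  have habs : |aminus| = -aminus := abs_of_nonpos haminus_nonpos
  set B : ℕ → Set ℝ := fun k => if k = 1 then I1 else I2 with hB
  have hBmeas : ∀ k, MeasurableSet (B k) := by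
    intro k
    simp only [hB]
    split <;> exact measurableSet_Icc
  -- inclusion of events
  have hsub : (⋂ k ∈ Finset.Icc 1 N, Y k ⁻¹' B k) ⊆
      {ω | ∀ n ∈ Finset.Icc 1 N, X n ω ≤ 0} := by
    intro ω hω
    simp only [Set.mem_iInter, Set.mem_preimage] at hω
    have hY1 : Y 1 ω ∈ I1 := by
      have := hω 1 (Finset.mem_Icc.mpr ⟨le_refl 1, hN⟩)
      simpa [hB] using this
    have hYk : ∀ k, 2 ≤ k → k ≤ N → Y k ω ∈ I2 := by
      intro k h2 hk
      have h := hω k (Finset.mem_Icc.mpr ⟨by omega, hk⟩)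
      have hne : k ≠ 1 := by omega
      simpa [hB, hne] using h
    have key : ∀ n, 1 ≤ n → n ≤ N → X n ω ∈ Set.Icc α 0 := by
      intro n
      induction n using Nat.strong_induction_on with
      | _ n ih =>
        intro h1 hn
        have hXprev : ∀ k ∈ Finset.Icc 1 p, X (n - k) ω ∈ Set.Icc α 0 := by
          intro k hk
          rcases Nat.eq_zero_or_pos (n - k) with h0 | hpos
          · rw [h0, hX0]
            exact ⟨le_of_lt hα, le_refl 0⟩
          · exact ih (n - k) (Nat.sub_lt h1 (Finset.mem_Icc.mp hk).1) hpos
              (le_trans (Nat.sub_le n k) hn)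
        have hSlow : α * aplus ≤ ∑ k ∈ Finset.Icc 1 p, a k * X (n - k) ω := by
          have h1' : α * aplus = ∑ k ∈ Finset.Icc 1 p, min (a k * α) 0 := by
            rw [haplus, Finset.mul_sum, Finset.sum_filter]
            refine Finset.sum_congr rfl fun k _ => ?_
            rcases lt_or_ge 0 (a k) with h | h
            · rw [if_pos h, min_eq_left (by nlinarith), mul_comm]
            · rw [if_neg (not_lt.mpr h), min_eq_right (by nlinarith)]
          rw [h1']
          refine Finset.sum_le_sum fun k hk => ?_
          obtain ⟨hl, hu⟩ := hXprev k hk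
          rcases le_or_gt 0 (a k) with h | h
          · exact le_trans (min_le_left _ _) (mul_le_mul_of_nonneg_left hl h)
          · exact le_trans (min_le_right _ _) (by nlinarith)
        have hShigh : ∑ k ∈ Finset.Icc 1 p, a k * X (n - k) ω ≤ α * aminus := by
          have h2' : α * aminus = ∑ k ∈ Finset.Icc 1 p, max (a k * α) 0 := by
            rw [haminus, Finset.mul_sum, Finset.sum_filter]
            refine Finset.sum_congr rfl fun k _ => ?_
            rcases lt_or_ge (a k) 0 with h | h
            · rw [if_pos h, max_eq_left (by nlinarith), mul_comm]
            · rw [if_neg (not_lt.mpr h), max_eq_right (by nlinarith)]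
          rw [h2']
          refine Finset.sum_le_sum fun k hk => ?_
          obtain ⟨hl, hu⟩ := hXprev k hk
          rcases le_or_gt 0 (a k) with h | h
          · exact le_trans (by nlinarith) (le_max_right _ _)
          · exact le_trans (by nlinarith) (le_max_left _ _)
        rcases eq_or_lt_of_le h1 with h1eq | h2le
        · -- n = 1
          have hn1 : n = 1 := h1eq.symm
          subst hn1
          have hX1 : X 1 ω = Y 1 ω := by
            rw [hXrec 1 le_rfl ω]
            have : ∀ k ∈ Finset.Icc 1 p, a k * X (1 - k) ω = 0 := by
              intro k hk
              have : (1 : ℕ) - k = 0 := by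
                have := (Finset.mem_Icc.mp hk).1; omega
              rw [this, hX0, mul_zero]
            rw [Finset.sum_congr rfl this, Finset.sum_const_zero, zero_add]
          rw [hX1]
          exact hY1
        · -- 2 ≤ n
          have hYn : Y n ω ∈ I2 := hYk n h2le hn
          obtain ⟨hyl, hyu⟩ := hYn
          rw [hXrec n h1 ω]
          constructor
          · have : α * aplus + α * (1 - aplus) = α := by ring
            nlinarith [hSlow, hyl]
          · rw [habs] at hyu
            nlinarith [hShigh, hyu]
    intro n hn
    obtain ⟨h1, h2⟩ := Finset.mem_Icc.mp hn
    exact (key n h1 h2).2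
  -- probability computation
  have hmeasE : ℙ (⋂ k ∈ Finset.Icc 1 N, Y k ⁻¹' B k)
      = ∏ k ∈ Finset.Icc 1 N, ℙ (Y k ⁻¹' B k) := by
    refine hindep.meas_biInter fun i _ => ?_
    exact ⟨B i, hBmeas i, rfl⟩
  have hsplit : Finset.Icc 1 N = insert 1 (Finset.Icc 2 N) := by
    ext x
    simp only [Finset.mem_Icc, Finset.mem_insert]
    omega
  have hnotmem : (1 : ℕ) ∉ Finset.Icc 2 N := by
    simp [Finset.mem_Icc]
  have hprod : ∏ k ∈ Finset.Icc 1 N, ℙ (Y k ⁻¹' B k)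
      = ℙ (Y 1 ⁻¹' I1) * ℙ (Y 1 ⁻¹' I2) ^ (N - 1) := by
    rw [hsplit, Finset.prod_insert hnotmem]
    have hB1 : B 1 = I1 := if_pos rfl
    have heach : ∀ k ∈ Finset.Icc 2 N, ℙ (Y k ⁻¹' B k) = ℙ (Y 1 ⁻¹' I2) := by
      intro k hk
      have hne : k ≠ 1 := by
        have := (Finset.mem_Icc.mp hk).1; omega
      have hBk : B k = I2 := if_neg hne
      rw [hBk]
      exact (hident k).measure_mem_eq measurableSet_Icc
    rw [Finset.prod_congr rfl heach, Finset.prod_const, hB1, Nat.card_Icc]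
    congr 1
  calc ℙ {ω | Y 1 ω ∈ I1} * ℙ {ω | Y 1 ω ∈ I2} ^ (N - 1)
      = ℙ (Y 1 ⁻¹' I1) * ℙ (Y 1 ⁻¹' I2) ^ (N - 1) := rfl
    _ = ∏ k ∈ Finset.Icc 1 N, ℙ (Y k ⁻¹' B k) := hprod.symm
    _ = ℙ (⋂ k ∈ Finset.Icc 1 N, Y k ⁻¹' B k) := hmeasE.symm
    _ ≤ ℙ {ω | ∀ n ∈ Finset.Icc 1 N, X n ω ≤ 0} := measure_mono hsub
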